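/- Let T = k[x_0, x_1, y_0, y_1, y_2] be the Cox ring of P^1 × P^2 and let I = (y_0^2, x_0 y_0, x_0 y_1^3) ⊆ T, whose Hilbert polynomial is P_I(t_1,t_2) = 3t_1 + 2t_2 + 1. Then there is no point (d_1,d_2) ∈ ℕ^2 with I generated in degrees ≤ (d_1,d_2) such that both H_I(d_1+1, d_2) = H_I(d_1,d_2)^{⟨d_1⟩_1} and H_I(d_1, d_2+1) = H_I(d_1,d_2)^{⟨d_2⟩_2} hold. -/

import Mathlib

open MvPolynomial

namespace Gotzmann

/-- Variable index set for the Cox ring of `P^{n 0} × ... × P^{n (s-1)}`: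
the variable `x_{i,j}` is `⟨i, j⟩`. -/
abbrev PPVar (s : ℕ) (n : Fin s → ℕ) : Type := Σ i : Fin s, Fin (n i + 1)

/-- The multidegree of the variable `x_{i,j}` is the standard basis vector `e_i ∈ ℤ^s` (here
realised in `ℕ^s`). -/
def ppw (s : ℕ) (n : Fin s → ℕ) : PPVar s n → (Fin s → ℕ) :=
  fun v => Pi.single v.1 1

/-- Weighted degree of an exponent vector. -/
def wdeg {σ M : Type*} [AddCommMonoid M] (w : σ → M) (u : σ →₀ ℕ) : M :=
  u.sum fun v e => e • w v

/-- Multigraded Hilbert function of `S/I` in degree `b`: the dimension of the image of the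
degree-`b` part of `S` in `S/I`. -/
noncomputable def hilb (k : Type*) [Field k] {σ M : Type*} [AddCommMonoid M]
    (w : σ → M) (I : Ideal (MvPolynomial σ k)) (b : M) : ℕ :=
  Module.finrank k ((weightedHomogeneousSubmodule k w b).map
    (Ideal.Quotient.mkₐ k I).toLinearMap)

/-- An ideal homogeneous with respect to the grading by `w`. -/
def IsHomog {k : Type*} [Field k] {σ M : Type*} [AddCommMonoid M]
    (w : σ → M) (I : Ideal (MvPolynomial σ k)) : Prop :=
  ∃ G : Set (MvPolynomial σ k),
    (∀ f ∈ G, ∃ d : M, f.IsWeightedHomogeneous w d) ∧ I = Ideal.span G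

/-- A monomial ideal. -/
def IsMonomialIdeal {k : Type*} [Field k] {σ : Type*} (I : Ideal (MvPolynomial σ k)) : Prop :=
  ∃ A : Set (σ →₀ ℕ), I = Ideal.span ((fun u => (monomial u (1 : k))) '' A)

/-- Generated in degrees componentwise at most `a`. -/
def GenInDegLE {k : Type*} [Field k] {σ : Type*} {s : ℕ}
    (w : σ → (Fin s → ℕ)) (I : Ideal (MvPolynomial σ k)) (a : Fin s → ℕ) : Prop :=
  ∃ G : Set (MvPolynomial σ k), I = Ideal.span G ∧
    ∀ f ∈ G, ∃ d : Fin s → ℕ, f.IsWeightedHomogeneous w d ∧ ∀ i, d i ≤ a i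

/-- Generated in degrees at most `a` for the standard grading. -/
def GenInDegLE1 {k : Type*} [Field k] {σ : Type*}
    (I : Ideal (MvPolynomial σ k)) (a : ℕ) : Prop :=
  ∃ G : Set (MvPolynomial σ k), I = Ideal.span G ∧
    ∀ f ∈ G, ∃ d : ℕ, f.IsWeightedHomogeneous (fun _ : σ => (1 : ℕ)) d ∧ d ≤ a

/-- `P` is the (multigraded) Hilbert polynomial of `I`: it agrees with the Hilbert function
for all multidegrees sufficiently deep in `ℕ^s`. -/
def IsHilbPoly (k : Type*) [Field k] {σ : Type*} {s : ℕ}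
    (w : σ → (Fin s → ℕ)) (I : Ideal (MvPolynomial σ k))
    (P : MvPolynomial (Fin s) ℚ) : Prop :=
  ∃ N : ℕ, ∀ b : Fin s → ℕ, (∀ i, N ≤ b i) →
    eval (fun i => (b i : ℚ)) P = (hilb k w I b : ℚ)

/-- `P` is the Hilbert polynomial of the standard-graded ideal `I`. -/
def IsHilbPoly1 (k : Type*) [Field k] {σ : Type*}
    (I : Ideal (MvPolynomial σ k)) (P : Polynomial ℚ) : Prop :=
  ∃ N : ℕ, ∀ b : ℕ, N ≤ b →
    P.eval (b : ℚ) = (hilb k (fun _ : σ => (1 : ℕ)) I b : ℚ)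

/-- Hilbert polynomial for a `ℤ^s`-graded ring, agreement deep in `ℕ^s ⊆ ℤ^s`. -/
def IsHilbPolyZ (k : Type*) [Field k] {σ : Type*} {s : ℕ}
    (w : σ → (Fin s → ℤ)) (I : Ideal (MvPolynomial σ k))
    (P : MvPolynomial (Fin s) ℚ) : Prop :=
  ∃ N : ℕ, ∀ b : Fin s → ℕ, (∀ i, N ≤ b i) →
    eval (fun i => (b i : ℚ)) P = (hilb k w I (fun i => (b i : ℤ)) : ℚ)

/-- A strongly multistable (monomial) ideal. -/
def StronglyMultistable {k : Type*} [Field k] {s : ℕ} {n : Fin s → ℕ}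
    (I : Ideal (MvPolynomial (PPVar s n) k)) : Prop :=
  IsMonomialIdeal I ∧
    ∀ u : PPVar s n →₀ ℕ, (monomial u (1 : k)) ∈ I →
      ∀ (i : Fin s) (j j' : Fin (n i + 1)), j' < j → u ⟨i, j⟩ ≠ 0 →
        (monomial (u - Finsupp.single ⟨i, j⟩ 1 + Finsupp.single ⟨i, j'⟩ 1) (1 : k)) ∈ I

/-- A strongly multistable set of exponent vectors. -/
def StronglyMultistableSet {s : ℕ} {n : Fin s → ℕ} (M : Set (PPVar s n →₀ ℕ)) : Prop :=
  ∀ u ∈ M, ∀ (i : Fin s) (j j' : Fin (n i + 1)), j' < j → u ⟨i, j⟩ ≠ 0 →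
    u - Finsupp.single ⟨i, j⟩ 1 + Finsupp.single ⟨i, j'⟩ 1 ∈ M

/-- The part of an exponent vector supported on block `i`. -/
noncomputable def blockPart {s : ℕ} {n : Fin s → ℕ} (i : Fin s) (u : PPVar s n →₀ ℕ) :
    PPVar s n →₀ ℕ := u.filter fun v => v.1 = i

/-- The part of an exponent vector supported off block `i`. -/
noncomputable def offBlock {s : ℕ} {n : Fin s → ℕ} (i : Fin s) (u : PPVar s n →₀ ℕ) :
    PPVar s n →₀ ℕ := u.filter fun v => v.1 ≠ i

/-- Exponent vectors supported on block `i` of total degree `d`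
(monomials of degree `d·e_i`). -/
def blockMon {s : ℕ} {n : Fin s → ℕ} (i : Fin s) (d : ℕ) : Set (PPVar s n →₀ ℕ) :=
  {p | (∀ v ∈ p.support, v.1 = i) ∧ p.sum (fun _ e => e) = d}

/-- `blockLt i u v` : the block-`i` monomial of `v` is strictly larger than that of `u` in the
lexicographic order with `x_{i,0} ≻ x_{i,1} ≻ ⋯`. -/
def blockLt {s : ℕ} {n : Fin s → ℕ} (i : Fin s) (u v : PPVar s n →₀ ℕ) : Prop :=
  Pi.Lex (· < ·) (fun {_} => (· < ·)) (fun j => u ⟨i, j⟩) (fun j => v ⟨i, j⟩)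

/-- `M` is an `x_i`-lex set: replacing the block-`i` part of a member by any lexicographically
larger monomial of the same degree stays in `M`. -/
def IsXiLex {s : ℕ} {n : Fin s → ℕ} (i : Fin s) (M : Set (PPVar s n →₀ ℕ)) : Prop :=
  ∀ u ∈ M, ∀ p' : PPVar s n →₀ ℕ,
    (∀ v ∈ p'.support, v.1 = i) →
    p'.sum (fun _ e => e) = (blockPart i u).sum (fun _ e => e) →
    blockLt i (blockPart i u) p' →
    offBlock i u + p' ∈ M

/-- The initial lexsegment of size `c` among block-`i` monomials of degree `d`. -/
noncomputable def lexSeg {s : ℕ} {n : Fin s → ℕ} (i : Fin s) (d c : ℕ) :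
    Set (PPVar s n →₀ ℕ) :=
  {p ∈ blockMon i d | (blockMon (n := n) i d ∩ {p' | blockLt i p p'}).ncard < c}

/-- The operation `M ↦ M^{x_i lex}`: in each fibre over a fixed off-block-`i` part, replace the
set of block-`i` parts by the initial lexsegment of the same cardinality. -/
noncomputable def xiLexify {s : ℕ} {n : Fin s → ℕ} (i : Fin s)
    (M : Set (PPVar s n →₀ ℕ)) : Set (PPVar s n →₀ ℕ) :=
  {w | ∃ u ∈ M, offBlock i w = offBlock i u ∧
        blockPart i w ∈ lexSeg i ((blockPart i u).sum fun _ e => e)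
          ({p | p ∈ blockMon i ((blockPart i u).sum fun _ e => e) ∧
              offBlock i u + p ∈ M}).ncard}

/-- Successively apply `M ↦ M^{x_i lex}` for the first `t` blocks. -/
noncomputable def lexifyUpTo {s : ℕ} {n : Fin s → ℕ} (M : Set (PPVar s n →₀ ℕ)) :
    ℕ → Set (PPVar s n →₀ ℕ)
  | 0 => M
  | t + 1 => if h : t < s then xiLexify ⟨t, h⟩ (lexifyUpTo M t) else lexifyUpTo M t

/-- `M^{multilex} = M^{x_1 lex ⋯ x_s lex}`. -/
noncomputable def multilexify {s : ℕ} {n : Fin s → ℕ} (M : Set (PPVar s n →₀ ℕ)) :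
    Set (PPVar s n →₀ ℕ) := lexifyUpTo M s

/-- The exponent vectors of the monomials of `I` of multidegree `a`. -/
def monomialsOf {k : Type*} [Field k] {s : ℕ} {n : Fin s → ℕ}
    (I : Ideal (MvPolynomial (PPVar s n) k)) (a : Fin s → ℕ) : Set (PPVar s n →₀ ℕ) :=
  {u | wdeg (ppw s n) u = a ∧ (monomial u (1 : k)) ∈ I}

/-- A multilex (monomial) ideal. -/
def IsMultilexIdeal {k : Type*} [Field k] {s : ℕ} {n : Fin s → ℕ}
    (I : Ideal (MvPolynomial (PPVar s n) k)) : Prop :=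
  IsMonomialIdeal I ∧ ∀ (a : Fin s → ℕ) (i : Fin s), IsXiLex i (monomialsOf I a)

/-- `κ` encodes the `d`-th Macaulay representation of `α`:
`α = C(κ(d),d) + ⋯ + C(κ(1),1)` with `κ(d) > ⋯ > κ(1) ≥ 0`; here `κ j` is the paper's
`κ(j+1)`. -/
def IsMacaulayRep (d α : ℕ) (κ : Fin d → ℕ) : Prop :=
  StrictMono κ ∧ α = ∑ j : Fin d, Nat.choose (κ j) ((j : ℕ) + 1)

/-- The Macaulay bound `α^{⟨d⟩}`. -/
noncomputable def macaulayBound (d α : ℕ) : ℕ :=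
  letI := Classical.propDecidable (∃ κ : Fin d → ℕ, IsMacaulayRep d α κ)
  if h : ∃ κ : Fin d → ℕ, IsMacaulayRep d α κ
  then ∑ j : Fin d, Nat.choose (h.choose j + 1) ((j : ℕ) + 2)
  else 0

/-- Maximal growth of a Hilbert function in one direction: with
`H u = C(nv+u, nv)·q(u) + r(u)` the Euclidean division, `H (u+1) = C(nv+u+1,nv)·q(u) + r(u)^⟨u⟩`. -/
def growthStep (nv : ℕ) (H : ℕ → ℕ) (u : ℕ) : Prop :=
  H (u + 1) =
    (nv + u + 1).choose nv * (H u / (nv + u).choose nv)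
      + macaulayBound u (H u % (nv + u).choose nv)

/-- Hilbert polynomial for a `ℤ^s`-graded Cox ring, with agreement sufficiently far into the nef
cone, parameterised by nef classes `c i`. -/
def IsHilbPolyNef (k : Type*) [Field k] {σ : Type*} {s : ℕ}
    (w : σ → (Fin s → ℤ)) (c : Fin s → (Fin s → ℤ))
    (I : Ideal (MvPolynomial σ k)) (P : MvPolynomial (Fin s) ℚ) : Prop :=
  ∃ N : ℕ, ∀ b : Fin s → ℕ, (∀ i, N ≤ b i) →
    eval (fun j => ((∑ i, (b i : ℤ) * c i j : ℤ) : ℚ)) P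
      = (hilb k w I (fun j => ∑ i, (b i : ℤ) * c i j) : ℚ)

/-- The `ℤ²`-grading of the Cox ring of Kleinschmidt's Picard-rank-2 toric variety `X_d(a)`:
`deg z_i = (-a_i, 1)` for `1 ≤ i ≤ s`, `deg z_{s+1} = (0,1)`, `deg z_i = (1,0)` otherwise
(indices here are `0`-based). -/
def kw (d s : ℕ) (a : Fin s → ℕ) : Fin (d + 2) → (Fin 2 → ℤ) :=
  fun i => if h : (i : ℕ) < s then ![-(a ⟨i, h⟩ : ℤ), 1]
    else if (i : ℕ) = s then ![0, 1] else ![1, 0]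

/-- The bigrading of `T = k[x₀,x₁,y₀,y₁,y₂] = Cox(P¹ × P²)`. -/
def w18 : Fin 2 ⊕ Fin 3 → (Fin 2 → ℕ) :=
  Sum.elim (fun _ => ![1, 0]) (fun _ => ![0, 1])

lemma strictMono_fin_add {d : ℕ} {κ : Fin d → ℕ} (hκ : StrictMono κ) :
    ∀ (t : ℕ) (a b : Fin d), (b : ℕ) = (a : ℕ) + t → κ a + t ≤ κ b := by
  intro t
  induction t with
  | zero =>
    intro a b h
    obtain rfl : a = b := Fin.ext (by omega)
    omega
  | succ t ih =>
    intro a b h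
    have hb' : (a : ℕ) + t < d := by omega
    have h1 : κ a + t ≤ κ ⟨(a : ℕ) + t, hb'⟩ := ih a _ rfl
    have h2 : κ ⟨(a : ℕ) + t, hb'⟩ < κ b := hκ (by simp [Fin.lt_def]; omega)
    omega

lemma exists_rep : ∀ (d α B : ℕ), α < (B + d).choose d →
    ∃ κ : Fin d → ℕ, IsMacaulayRep d α κ ∧ ∀ j, κ j < B + d := by
  intro d
  induction d with
  | zero =>
    intro α B h
    simp at h
    exact ⟨fun j => j, ⟨fun a => a.elim0, by simp [h]⟩, fun j => j.elim0⟩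
  | succ d ih =>
    intro α B h
    have hPd : Nat.choose d (d+1) ≤ α := by simp [Nat.choose_eq_zero_of_lt]
    set m := Nat.findGreatest (fun n => Nat.choose n (d+1) ≤ α) (B + d) with hm
    have hmle : m ≤ B + d := Nat.findGreatest_le _
    have hdm : d ≤ m := Nat.le_findGreatest (Nat.le_add_left d B) hPd
    have hPm : Nat.choose m (d+1) ≤ α :=
      Nat.findGreatest_spec (P := fun n => Nat.choose n (d+1) ≤ α)
        (Nat.le_add_left d B) hPd
    have hgt : α < Nat.choose (m+1) (d+1) := by
      rcases Nat.lt_or_ge m (B+d) with hlt | hge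
      · have h2 : ¬ (Nat.choose (m+1) (d+1) ≤ α) :=
          Nat.findGreatest_is_greatest (P := fun n => Nat.choose n (d+1) ≤ α)
            (n := B + d) (k := m + 1) (by omega) (by omega)
        omega
      · have hmeq : m = B + d := le_antisymm hmle hge
        rw [hmeq]
        exact h
    have hsucc : Nat.choose (m+1) (d+1) = Nat.choose m d + Nat.choose m (d+1) :=
      Nat.choose_succ_succ m d
    have hrem : α - Nat.choose m (d+1) < Nat.choose ((m - d) + d) d := by
      have heq : (m - d) + d = m := by omega
      rw [heq]
      omega
    obtain ⟨κ', ⟨hκ'm, hκ's⟩, hκ'b⟩ := ih (α - Nat.choose m (d+1)) (m - d) hrem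
    have hκ'b' : ∀ j, κ' j < m := by intro j; have := hκ'b j; omega
    refine ⟨Fin.snoc κ' m, ⟨?_, ?_⟩, ?_⟩
    · intro a b hab
      rcases Fin.eq_castSucc_or_eq_last b with ⟨b', rfl⟩ | rfl
      · have ha : (a : ℕ) < d := by
          have := hab; simp [Fin.lt_def] at this ⊢; have := b'.isLt; omega
        have haeq : a = Fin.castSucc ⟨(a : ℕ), ha⟩ := by simp [Fin.ext_iff]
        rw [haeq, Fin.snoc_castSucc, Fin.snoc_castSucc]
        exact hκ'm (by simpa [Fin.lt_def] using hab)
      · have ha : (a : ℕ) < d := by simpa [Fin.lt_def] using hab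
        have haeq : a = Fin.castSucc ⟨(a : ℕ), ha⟩ := by simp [Fin.ext_iff]
        rw [haeq, Fin.snoc_castSucc, Fin.snoc_last]
        exact hκ'b' _
    · rw [Fin.sum_univ_castSucc]
      simp only [Fin.snoc_castSucc, Fin.snoc_last, Fin.val_last, Fin.coe_castSucc]
      rw [← hκ's]
      omega
    · intro j
      rcases Fin.eq_castSucc_or_eq_last j with ⟨j', rfl⟩ | rfl
      · rw [Fin.snoc_castSucc]; have := hκ'b' j'; omega
      · rw [Fin.snoc_last]; omega

lemma macaulayBound_spec {d α : ℕ} (h : ∃ κ, IsMacaulayRep d α κ) :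
    ∃ κ : Fin d → ℕ, IsMacaulayRep d α κ ∧
      macaulayBound d α = ∑ j : Fin d, Nat.choose (κ j + 1) ((j : ℕ) + 2) := by
  refine ⟨h.choose, h.choose_spec, ?_⟩
  rw [macaulayBound, dif_pos h]

lemma mac_ge {d α : ℕ} (h : ∃ κ, IsMacaulayRep d α κ) : α ≤ macaulayBound d α := by
  obtain ⟨κ, ⟨hm, hs⟩, he⟩ := macaulayBound_spec h
  rw [he, hs]
  refine Finset.sum_le_sum fun j _ => ?_
  have h : (κ j + 1).choose ((j : ℕ) + 2)
      = (κ j).choose ((j : ℕ) + 1) + (κ j).choose ((j : ℕ) + 2) :=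
    Nat.choose_succ_succ' (κ j) ((j : ℕ) + 1)
  omega

lemma exists_rep_small {d r : ℕ} (hr : r ≤ d) : ∃ κ, IsMacaulayRep d r κ := by
  obtain ⟨κ, hκ, -⟩ := exists_rep d r 1 (by
    rw [show 1 + d = d + 1 by omega, Nat.choose_succ_self_right]; omega)
  exact ⟨κ, hκ⟩

lemma mac_small {d r : ℕ} (hr : r ≤ d) : macaulayBound d r = r := by
  obtain ⟨κ, ⟨hmono, hsum⟩, hbd⟩ := macaulayBound_spec (exists_rep_small hr)
  have hsmall : ∀ j : Fin d, κ j ≤ (j : ℕ) + 1 := by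
    by_contra hc
    push_neg at hc
    obtain ⟨j₀, hj₀⟩ := hc
    have hd1 : 0 < d := j₀.pos
    set L : Fin d := ⟨d - 1, by omega⟩ with hL
    have h1 : κ j₀ + (d - 1 - (j₀ : ℕ)) ≤ κ L :=
      strictMono_fin_add hmono _ j₀ L (by rw [hL]; simp; omega)
    have h2 : d + 1 ≤ κ L := by have := j₀.isLt; omega
    have h3 : Nat.choose (d + 1) ((L : ℕ) + 1) ≤ Nat.choose (κ L) ((L : ℕ) + 1) :=
      Nat.choose_le_choose _ h2
    have h4 : Nat.choose (κ L) ((L : ℕ) + 1) ≤ r := by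
      rw [hsum]
      exact Finset.single_le_sum (f := fun j : Fin d => Nat.choose (κ j) ((j : ℕ) + 1))
        (fun j _ => Nat.zero_le _) (Finset.mem_univ L)
    have h5 : (L : ℕ) + 1 = d := by rw [hL]; simp; omega
    rw [h5] at h3 h4
    rw [Nat.choose_succ_self_right] at h3
    omega
  rw [hbd, hsum]
  refine Finset.sum_congr rfl fun j _ => ?_
  rcases Nat.lt_or_ge (κ j) ((j : ℕ) + 1) with hlt | hge
  · rw [Nat.choose_eq_zero_of_lt hlt, Nat.choose_eq_zero_of_lt (by omega)]
  · have : κ j = (j : ℕ) + 1 := by have := hsmall j; omega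
    rw [this, Nat.choose_self, Nat.choose_self]

lemma mac_one (α : ℕ) : macaulayBound 1 α = Nat.choose (α + 1) 2 := by
  have hex : ∃ κ, IsMacaulayRep 1 α κ := by
    obtain ⟨κ, hκ, -⟩ := exists_rep 1 α (α + 1) (by simp [Nat.choose_one_right])
    exact ⟨κ, hκ⟩
  obtain ⟨κ, ⟨hmono, hsum⟩, hbd⟩ := macaulayBound_spec hex
  rw [Fin.sum_univ_one] at hsum
  simp only [Fin.val_zero, zero_add, Nat.choose_one_right] at hsum
  rw [hbd, Fin.sum_univ_one]
  simp [← hsum]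

lemma mac_two_bound {d α : ℕ} (hd : 2 ≤ d) (hex : ∃ κ, IsMacaulayRep d α κ)
    (h2 : macaulayBound d α = α + 2) : α + 1 ≤ 3 * d := by
  obtain ⟨κ, ⟨hmono, hsum⟩, hbd⟩ := macaulayBound_spec hex
  have hsplit : (∑ j : Fin d, Nat.choose (κ j + 1) ((j : ℕ) + 2))
      = (∑ j : Fin d, Nat.choose (κ j) ((j : ℕ) + 1))
        + ∑ j : Fin d, Nat.choose (κ j) ((j : ℕ) + 2) := by
    rw [← Finset.sum_add_distrib]
    exact Finset.sum_congr rfl fun j _ => Nat.choose_succ_succ _ _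
  have hsum2 : (∑ j : Fin d, Nat.choose (κ j) ((j : ℕ) + 2)) = 2 := by
    rw [hbd, hsplit, ← hsum] at h2
    omega
  have hle : ∀ j : Fin d, κ j ≤ (j : ℕ) + 2 := by
    intro j
    by_contra hc
    push_neg at hc
    have h3 : Nat.choose ((j : ℕ) + 3) ((j : ℕ) + 2) ≤ Nat.choose (κ j) ((j : ℕ) + 2) :=
      Nat.choose_le_choose _ (by omega)
    have h4 : Nat.choose (κ j) ((j : ℕ) + 2)
        ≤ ∑ j : Fin d, Nat.choose (κ j) ((j : ℕ) + 2) :=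
      Finset.single_le_sum (f := fun j : Fin d => Nat.choose (κ j) ((j : ℕ) + 2))
        (fun j _ => Nat.zero_le _) (Finset.mem_univ j)
    rw [show (j : ℕ) + 3 = ((j : ℕ) + 2) + 1 by omega, Nat.choose_succ_self_right] at h3
    omega
  classical
  set J : Finset (Fin d) := Finset.univ.filter (fun j => κ j = (j : ℕ) + 2) with hJdef
  have hcard : J.card = 2 := by
    have : (∑ j : Fin d, Nat.choose (κ j) ((j : ℕ) + 2))
        = ∑ j : Fin d, (if κ j = (j : ℕ) + 2 then 1 else 0) := by
      refine Finset.sum_congr rfl fun j _ => ?_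
      rcases eq_or_lt_of_le (hle j) with heq | hlt
      · rw [if_pos heq, heq, Nat.choose_self]
      · rw [if_neg (by omega), Nat.choose_eq_zero_of_lt hlt]
    rw [this, Finset.sum_boole] at hsum2
    exact_mod_cast hsum2
  obtain ⟨a, b, hab, hJ⟩ := Finset.card_eq_two.mp hcard
  have hka : κ a = (a : ℕ) + 2 := by
    have : a ∈ J := by rw [hJ]; simp
    simpa [hJdef] using this
  have hkb : κ b = (b : ℕ) + 2 := by
    have : b ∈ J := by rw [hJ]; simp
    simpa [hJdef] using this
  have hsplit2 : α = (∑ j ∈ J, Nat.choose (κ j) ((j : ℕ) + 1))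
      + ∑ j ∈ Finset.univ.filter (fun j => ¬ (κ j = (j : ℕ) + 2)),
          Nat.choose (κ j) ((j : ℕ) + 1) := by
    rw [hsum, hJdef]
    exact (Finset.sum_filter_add_sum_filter_not _ _ _).symm
  have hJsum : (∑ j ∈ J, Nat.choose (κ j) ((j : ℕ) + 1)) = ((a : ℕ) + 2) + ((b : ℕ) + 2) := by
    rw [hJ, Finset.sum_pair hab, hka, hkb]
    rw [show (a : ℕ) + 2 = ((a : ℕ) + 1) + 1 by omega, Nat.choose_succ_self_right]
    rw [show (b : ℕ) + 2 = ((b : ℕ) + 1) + 1 by omega, Nat.choose_succ_self_right]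
  have hNsum : (∑ j ∈ Finset.univ.filter (fun j => ¬ (κ j = (j : ℕ) + 2)),
      Nat.choose (κ j) ((j : ℕ) + 1)) ≤ d - 2 := by
    have hcard2 : (Finset.univ.filter (fun j => ¬ (κ j = (j : ℕ) + 2))).card = d - 2 := by
      have := Finset.card_filter_add_card_filter_not
        (s := (Finset.univ : Finset (Fin d))) (p := fun j => κ j = (j : ℕ) + 2)
      rw [← hJdef] at this
      simp only [Finset.card_univ, Fintype.card_fin] at this
      omega
    calc (∑ j ∈ Finset.univ.filter (fun j => ¬ (κ j = (j : ℕ) + 2)),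
        Nat.choose (κ j) ((j : ℕ) + 1))
        ≤ ∑ _j ∈ Finset.univ.filter (fun j => ¬ (κ j = (j : ℕ) + 2)), 1 := by
          refine Finset.sum_le_sum fun j hj => ?_
          simp only [Finset.mem_filter] at hj
          have h5 : κ j ≤ (j : ℕ) + 1 := by have := hle j; omega
          calc Nat.choose (κ j) ((j : ℕ) + 1) ≤ Nat.choose ((j : ℕ) + 1) ((j : ℕ) + 1) :=
            Nat.choose_le_choose _ h5
          _ = 1 := Nat.choose_self _
      _ = d - 2 := by rw [Finset.sum_const, smul_eq_mul, mul_one, hcard2]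
  have hane : (a : ℕ) ≠ (b : ℕ) := fun h => hab (Fin.ext h)
  have ha' := a.isLt
  have hb' := b.isLt
  omega
lemma support_subset_of_mem_span_monomials {k : Type*} [Field k] {σ : Type*}
    {s : Set (σ →₀ ℕ)} {p : MvPolynomial σ k}
    (hp : p ∈ Submodule.span k ((fun u => monomial u (1 : k)) '' s)) :
    ↑p.support ⊆ s := by
  have h : (fun u => monomial u (1 : k)) '' s
      = (fun u => AddMonoidAlgebra.single u (1 : k)) '' s := by
    refine Set.image_congr fun u _ => ?_
    rw [single_eq_monomial]
  rw [h, ← AddMonoidAlgebra.supported_eq_span_single] at hp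
  exact AddMonoidAlgebra.mem_supported.mp hp

lemma hilb_monomial_card {k : Type*} [Field k] {σ M : Type*} [AddCommMonoid M]
    (w : σ → M) (A : Set (σ →₀ ℕ)) (b : M) (S : Finset (σ →₀ ℕ))
    (hS : ∀ u : σ →₀ ℕ, u ∈ S ↔ (Finsupp.weight w u = b ∧ ¬ ∃ a ∈ A, a ≤ u)) :
    hilb k w (Ideal.span ((fun u => monomial u (1 : k)) '' A)) b = S.card := by
  classical
  set I : Ideal (MvPolynomial σ k) := Ideal.span ((fun u => monomial u (1 : k)) '' A) with hI
  set φ := (Ideal.Quotient.mkₐ k I).toLinearMap with hφ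
  have hφ_apply : ∀ p : MvPolynomial σ k, φ p = Ideal.Quotient.mk I p := fun p => rfl
  -- the monomial family over S
  set v : S → MvPolynomial σ k := fun u => monomial (u : σ →₀ ℕ) (1 : k) with hv
  have hv_indep : LinearIndependent k v := by
    have : v = (fun s => monomial s (1 : k)) ∘ (Subtype.val : S → (σ →₀ ℕ)) := rfl
    rw [this, ← coe_basisMonomials]
    exact (basisMonomials σ k).linearIndependent.comp _ Subtype.val_injective
  -- the key disjointness
  have hdisj : Submodule.span k (Set.range v) ⊓ LinearMap.ker φ = ⊥ := by
    rw [eq_bot_iff]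
    rintro p ⟨hp1, hp2⟩
    simp only [Submodule.mem_bot]
    have hker : p ∈ I := by
      rw [← Ideal.Quotient.eq_zero_iff_mem, ← hφ_apply]
      exact hp2
    have hmem : ∀ m ∈ p.support, ∃ a ∈ A, a ≤ m := by
      rw [hI] at hker
      exact mem_ideal_span_monomial_image.mp hker
    have hrange : Set.range v = (fun u => monomial u (1 : k)) '' (S : Set (σ →₀ ℕ)) := by
      rw [hv, Set.image_eq_range]
      rfl
    rw [hrange] at hp1
    have hsupp : ↑p.support ⊆ (S : Set (σ →₀ ℕ)) :=
      support_subset_of_mem_span_monomials hp1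
    by_contra hne
    obtain ⟨m, hm⟩ := MvPolynomial.support_nonempty.mpr hne
    have hmS : m ∈ S := hsupp hm
    exact ((hS m).mp hmS).2 (hmem m hm)
  have hmap_indep : LinearIndependent k (φ ∘ v) := hv_indep.map (by rw [disjoint_iff]; exact hdisj)
  -- the image submodule is the span of the images
  have himage : (weightedHomogeneousSubmodule k w b).map φ
      = Submodule.span k (Set.range (φ ∘ v)) := by
    rw [weightedHomogeneousSubmodule_eq_finsupp_supported]
    have himg : (fun u : σ →₀ ℕ => AddMonoidAlgebra.single u (1 : k))
          '' { d : σ →₀ ℕ | Finsupp.weight w d = b }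
        = (fun u => monomial u (1 : k)) '' { d : σ →₀ ℕ | Finsupp.weight w d = b } :=
      Set.image_congr fun u _ => single_eq_monomial u 1
    rw [AddMonoidAlgebra.supported_eq_span_single, himg, Submodule.map_span]
    apply le_antisymm
    · rw [Submodule.span_le]
      rintro x ⟨p, ⟨u, hu, rfl⟩, rfl⟩
      by_cases huS : u ∈ S
      · apply Submodule.subset_span
        exact ⟨⟨u, huS⟩, rfl⟩
      · have hmem : (monomial u (1 : k)) ∈ I := by
          rw [hI]
          rw [mem_ideal_span_monomial_image]
          intro m hm
          have hmu : m = u := by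
            rw [support_monomial, if_neg (one_ne_zero)] at hm
            simpa using hm
          subst hmu
          have hcon : ¬((Finsupp.weight w) m = b ∧ ¬∃ a ∈ A, a ≤ m) :=
            fun hcon => huS ((hS m).mpr hcon)
          push_neg at hcon
          exact hcon hu
        have : φ (monomial u (1 : k)) = 0 := by
          rw [hφ_apply, Ideal.Quotient.eq_zero_iff_mem]
          exact hmem
        rw [this]
        exact Submodule.zero_mem _
    · rw [Submodule.span_le]
      rintro x ⟨u, rfl⟩
      apply Submodule.subset_span
      exact ⟨monomial (u : σ →₀ ℕ) 1, ⟨u, ((hS u).mp u.2).1, rfl⟩, rfl⟩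
  rw [hilb, himage, finrank_span_eq_card hmap_indep]
  simp


abbrev V := Fin 2 ⊕ Fin 3

noncomputable def g1 : V →₀ ℕ := Finsupp.single (Sum.inr 0) 2
noncomputable def g2 : V →₀ ℕ := Finsupp.single (Sum.inl 0) 1 + Finsupp.single (Sum.inr 0) 1
noncomputable def g3 : V →₀ ℕ := Finsupp.single (Sum.inl 0) 1 + Finsupp.single (Sum.inr 1) 3

lemma weight_w18 (u : V →₀ ℕ) :
    Finsupp.weight w18 u
      = ![u (Sum.inl 0) + u (Sum.inl 1), u (Sum.inr 0) + u (Sum.inr 1) + u (Sum.inr 2)] := by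
  have h : Finsupp.weight w18 u = ∑ v : V, u v • w18 v := by
    rw [Finsupp.weight_apply]
    exact Finsupp.sum_fintype _ _ (fun v => zero_smul _ _)
  rw [h]
  funext t
  rw [Fintype.sum_sum_type]
  simp only [Finset.sum_apply, Pi.smul_apply, smul_eq_mul, Fin.sum_univ_two, Fin.sum_univ_three,
    w18, Sum.elim_inl, Sum.elim_inr]
  fin_cases t <;> simp <;> ring

lemma g1_le (u : V →₀ ℕ) : g1 ≤ u ↔ 2 ≤ u (Sum.inr 0) := by
  rw [g1, Finsupp.single_le_iff]

lemma g2_le (u : V →₀ ℕ) : g2 ≤ u ↔ 1 ≤ u (Sum.inl 0) ∧ 1 ≤ u (Sum.inr 0) := by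
  rw [g2, Finsupp.le_def]
  constructor
  · intro h
    constructor
    · have := h (Sum.inl 0); simpa using this
    · have := h (Sum.inr 0); simpa using this
  · rintro ⟨h1, h2⟩ s
    rcases s with i | j
    · fin_cases i <;> simp [Finsupp.single_apply] <;> omega
    · fin_cases j <;> simp [Finsupp.single_apply] <;> omega

lemma g3_le (u : V →₀ ℕ) : g3 ≤ u ↔ 1 ≤ u (Sum.inl 0) ∧ 3 ≤ u (Sum.inr 1) := by
  rw [g3, Finsupp.le_def]
  constructor
  · intro h
    constructor
    · have := h (Sum.inl 0); simpa using this
    · have := h (Sum.inr 1); simpa using this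
  · rintro ⟨h1, h2⟩ s
    rcases s with i | j
    · fin_cases i <;> simp [Finsupp.single_apply] <;> omega
    · fin_cases j <;> simp [Finsupp.single_apply] <;> omega


noncomputable def F (d1 d2 : ℕ) (t : ℕ × ℕ × ℕ) : V →₀ ℕ :=
  Finsupp.single (Sum.inl 0) t.1 + Finsupp.single (Sum.inl 1) (d1 - t.1)
    + Finsupp.single (Sum.inr 0) t.2.1 + Finsupp.single (Sum.inr 1) t.2.2
    + Finsupp.single (Sum.inr 2) (d2 - (t.2.1 + t.2.2))

lemma F_apply (d1 d2 : ℕ) (t : ℕ × ℕ × ℕ) :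
    F d1 d2 t (Sum.inl 0) = t.1 ∧ F d1 d2 t (Sum.inl 1) = d1 - t.1
      ∧ F d1 d2 t (Sum.inr 0) = t.2.1 ∧ F d1 d2 t (Sum.inr 1) = t.2.2
      ∧ F d1 d2 t (Sum.inr 2) = d2 - (t.2.1 + t.2.2) := by
  refine ⟨?_, ?_, ?_, ?_, ?_⟩ <;>
    simp [F, Finsupp.single_apply]

def P (d1 d2 : ℕ) : Finset (ℕ × ℕ × ℕ) :=
  (({0} : Finset ℕ) ×ˢ (((({0} : Finset ℕ) ×ˢ Finset.range (d2+1)))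
      ∪ (({1} : Finset ℕ) ×ˢ Finset.range d2)))
  ∪ ((Finset.Icc 1 d1) ×ˢ (({0} : Finset ℕ) ×ˢ Finset.range (min 3 (d2+1))))

lemma mem_P (d1 d2 : ℕ) (t : ℕ × ℕ × ℕ) :
    t ∈ P d1 d2 ↔ (t.1 ≤ d1 ∧ t.2.1 + t.2.2 ≤ d2 ∧ t.2.1 ≤ 1
      ∧ (t.1 = 0 ∨ t.2.1 = 0) ∧ (t.1 = 0 ∨ t.2.2 ≤ 2)) := by
  obtain ⟨a, b, c⟩ := t
  simp [P, Finset.mem_union, Finset.mem_product, Finset.mem_range, Finset.mem_Icc]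
  omega

lemma card_P (d1 d2 : ℕ) : (P d1 d2).card = 2 * d2 + 1 + d1 * min 3 (d2 + 1) := by
  rw [P]
  rw [Finset.card_union_of_disjoint (by
    rw [Finset.disjoint_left]
    rintro ⟨a, b, c⟩ h1 h2
    simp [Finset.mem_product] at h1 h2
    omega)]
  rw [Finset.card_product, Finset.card_product, Finset.card_product]
  rw [Finset.card_union_of_disjoint (by
    rw [Finset.disjoint_left]
    rintro ⟨b, c⟩ h1 h2
    simp [Finset.mem_product] at h1 h2
    omega)]
  simp [Nat.card_Icc]
  ring

lemma F_injOn (d1 d2 : ℕ) : Set.InjOn (F d1 d2) (P d1 d2) := by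
  rintro ⟨a, b, c⟩ - ⟨a', b', c'⟩ - h
  obtain ⟨h1, -, h3, h4, -⟩ := F_apply d1 d2 (a, b, c)
  obtain ⟨h1', -, h3', h4', -⟩ := F_apply d1 d2 (a', b', c')
  simp only at h1 h3 h4 h1' h3' h4'
  have e1 : a = a' := by rw [← h1, ← h1', h]
  have e3 : b = b' := by rw [← h3, ← h3', h]
  have e4 : c = c' := by rw [← h4, ← h4', h]
  simp [e1, e3, e4]


lemma weight_eq_iff (d1 d2 : ℕ) (u : V →₀ ℕ) :
    Finsupp.weight w18 u = ![d1, d2]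
      ↔ (u (Sum.inl 0) + u (Sum.inl 1) = d1
          ∧ u (Sum.inr 0) + u (Sum.inr 1) + u (Sum.inr 2) = d2) := by
  rw [weight_w18]
  constructor
  · intro h
    exact ⟨by simpa using congrFun h 0, by simpa using congrFun h 1⟩
  · rintro ⟨h1, h2⟩
    funext t
    fin_cases t <;> simp [h1, h2]

lemma not_exists_iff (u : V →₀ ℕ) :
    (¬ ∃ a ∈ ({g1, g2, g3} : Set (V →₀ ℕ)), a ≤ u)
      ↔ (u (Sum.inr 0) ≤ 1 ∧ (u (Sum.inl 0) = 0 ∨ u (Sum.inr 0) = 0)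
          ∧ (u (Sum.inl 0) = 0 ∨ u (Sum.inr 1) ≤ 2)) := by
  simp only [Set.mem_insert_iff, Set.mem_singleton_iff, exists_eq_or_imp, exists_eq_left,
    g1_le, g2_le, g3_le]
  omega

lemma mem_S (d1 d2 : ℕ) (u : V →₀ ℕ) :
    u ∈ (P d1 d2).image (F d1 d2) ↔
      (Finsupp.weight w18 u = ![d1, d2]
        ∧ ¬ ∃ a ∈ ({g1, g2, g3} : Set (V →₀ ℕ)), a ≤ u) := by
  rw [weight_eq_iff, not_exists_iff, Finset.mem_image]
  constructor
  · rintro ⟨t, ht, rfl⟩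
    rw [mem_P] at ht
    obtain ⟨h1, h2, h3, h4, h5⟩ := F_apply d1 d2 t
    rw [h1, h2, h3, h4, h5]
    omega
  · rintro ⟨⟨hx, hy⟩, hstd⟩
    refine ⟨(u (Sum.inl 0), u (Sum.inr 0), u (Sum.inr 1)), ?_, ?_⟩
    · rw [mem_P]
      simp only
      omega
    · obtain ⟨h1, h2, h3, h4, h5⟩ := F_apply d1 d2 (u (Sum.inl 0), u (Sum.inr 0), u (Sum.inr 1))
      simp only at h1 h2 h3 h4 h5
      ext s
      rcases s with i | j
      · fin_cases i <;>
          simp only [Fin.zero_eta, Fin.mk_one, Fin.isValue] <;>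
          omega
      · fin_cases j <;>
          simp only [Fin.zero_eta, Fin.mk_one, Fin.isValue,
            show (⟨2, by omega⟩ : Fin 3) = 2 from rfl] <;>
          omega


noncomputable def Iex (k : Type*) [Field k] : Ideal (MvPolynomial V k) :=
  Ideal.span {X (Sum.inr 0) ^ 2, X (Sum.inl 0) * X (Sum.inr 0), X (Sum.inl 0) * X (Sum.inr 1) ^ 3}

lemma gens_eq (k : Type*) [Field k] :
    ({X (Sum.inr 0) ^ 2, X (Sum.inl 0) * X (Sum.inr 0), X (Sum.inl 0) * X (Sum.inr 1) ^ 3}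
        : Set (MvPolynomial V k))
      = (fun u => monomial u (1 : k)) '' {g1, g2, g3} := by
  have hX : ∀ v : V, (X v : MvPolynomial V k) = monomial (Finsupp.single v 1) 1 := fun v => by
    rw [← X_pow_eq_monomial, pow_one]
  have e1 : (monomial g1 (1 : k)) = X (Sum.inr 0) ^ 2 := by
    rw [g1, X_pow_eq_monomial]
  have e2 : (monomial g2 (1 : k)) = X (Sum.inl 0) * X (Sum.inr 0) := by
    rw [g2, hX, hX, monomial_mul, one_mul]
  have e3 : (monomial g3 (1 : k)) = X (Sum.inl 0) * X (Sum.inr 1) ^ 3 := by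
    rw [g3, hX, X_pow_eq_monomial, monomial_mul, one_mul]
  rw [Set.image_insert_eq, Set.image_insert_eq, Set.image_singleton, e1, e2, e3]

lemma hilb_value (k : Type*) [Field k] (d1 d2 : ℕ) :
    hilb k w18 (Iex k) ![d1, d2] = 2 * d2 + 1 + d1 * min 3 (d2 + 1) := by
  rw [Iex, gens_eq k,
    hilb_monomial_card w18 {g1, g2, g3} ![d1, d2] ((P d1 d2).image (F d1 d2)) (mem_S d1 d2),
    Finset.card_image_of_injOn (F_injOn d1 d2), card_P]

lemma not_gen00 (k : Type*) [Field k] : ¬ GenInDegLE w18 (Iex k) ![0, 0] := by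
  rintro ⟨G, hspan, hdeg⟩
  have hone : (1 : MvPolynomial V k) ∉ Iex k := by
    rw [Iex, gens_eq k]
    intro hmem
    rw [mem_ideal_span_monomial_image] at hmem
    obtain ⟨a, ha, hle⟩ := hmem 0 (by simp [MvPolynomial.mem_support_iff])
    have hle' := Finsupp.le_def.mp hle
    rcases ha with rfl | rfl | rfl
    · have := hle' (Sum.inr 0); simp [g1, Finsupp.single_apply] at this
    · have := hle' (Sum.inl 0); simp [g2, Finsupp.single_apply] at this
    · have := hle' (Sum.inl 0); simp [g3, Finsupp.single_apply] at this
  have hy2 : (X (Sum.inr 0) ^ 2 : MvPolynomial V k) ∈ Iex k := by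
    rw [Iex]; exact Ideal.subset_span (by simp)
  have hy2ne : (X (Sum.inr 0) ^ 2 : MvPolynomial V k) ≠ 0 :=
    pow_ne_zero _ (MvPolynomial.X_ne_zero _)
  have hconst : ∀ f ∈ G, f = C (coeff 0 f) := by
    intro f hf
    obtain ⟨d, hhom, hdle⟩ := hdeg f hf
    have hd : d = ![0, 0] := by
      funext t
      have h := hdle t
      fin_cases t <;> simp at h ⊢ <;> omega
    have hd0 : ∀ u : V →₀ ℕ, coeff u f ≠ 0 → u = 0 := by
      intro u hu
      have hw := hhom hu
      rw [hd, weight_eq_iff] at hw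
      obtain ⟨hw1, hw2⟩ := hw
      ext s
      rcases s with i | j
      · fin_cases i <;>
          simp only [Fin.zero_eta, Fin.mk_one, Fin.isValue, Finsupp.coe_zero, Pi.zero_apply] <;>
          omega
      · fin_cases j <;>
          simp only [Fin.zero_eta, Fin.mk_one, Fin.isValue,
            show (⟨2, by omega⟩ : Fin 3) = 2 from rfl, Finsupp.coe_zero, Pi.zero_apply] <;>
          omega
    ext v
    by_cases hv : v = 0
    · subst hv; simp [coeff_C]
    · have hcv : coeff v f = 0 := by
        by_contra hne
        exact hv (hd0 v hne)
      simp [coeff_C, hv, Ne.symm hv, hcv]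
  by_cases hG : ∃ f ∈ G, f ≠ 0
  · obtain ⟨f, hf, hfne⟩ := hG
    have hc : coeff 0 f ≠ 0 := by
      intro h0
      exact hfne (by rw [hconst f hf, h0, map_zero])
    have hfI : f ∈ Iex k := by
      rw [hspan]
      exact Ideal.subset_span hf
    have h1 : (1 : MvPolynomial V k) ∈ Iex k := by
      have hmul : C ((coeff 0 f)⁻¹) * f ∈ Iex k := Ideal.mul_mem_left _ _ hfI
      have he : C ((coeff 0 f)⁻¹) * f = 1 := by
        nth_rewrite 2 [hconst f hf]
        rw [← C_mul, inv_mul_cancel₀ hc, C_1]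
      rwa [he] at hmul
    exact hone h1
  · push_neg at hG
    have hbot : Iex k = ⊥ := by
      rw [hspan, Ideal.span_eq_bot]
      exact hG
    rw [hbot] at hy2
    exact hy2ne (by simpa using hy2)

lemma main_aux (k : Type*) [Field k] :
    IsHilbPoly k w18 (Iex k) (3 * X 0 + 2 * X 1 + 1) ∧
    ¬ ∃ d1 d2 : ℕ, GenInDegLE w18 (Iex k) ![d1, d2] ∧
        growthStep 1 (fun u => hilb k w18 (Iex k) ![u, d2]) d1 ∧
        growthStep 2 (fun u => hilb k w18 (Iex k) ![d1, u]) d2 := by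
  constructor
  · refine ⟨2, fun b hb => ?_⟩
    have hb1 := hb 1
    have hbeq : b = ![b 0, b 1] := by funext t; fin_cases t <;> rfl
    rw [show (hilb k w18 (Iex k) b) = hilb k w18 (Iex k) ![b 0, b 1] from by rw [← hbeq]]
    rw [hilb_value, show min 3 (b 1 + 1) = 3 from by omega]
    simp only [map_add, map_mul, map_ofNat, eval_X, map_one]
    push_cast
    ring
  · rintro ⟨d1, d2, hgen, hg1, hg2⟩
    simp only [growthStep] at hg1 hg2
    rw [hilb_value k (d1 + 1) d2, hilb_value k d1 d2, Nat.choose_one_right,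
      Nat.choose_one_right] at hg1
    rw [hilb_value k d1 (d2 + 1), hilb_value k d1 d2] at hg2
    -- analyse condition (i)
    set q := (2 * d2 + 1 + d1 * min 3 (d2 + 1)) / (1 + d1) with hqdef
    set r := (2 * d2 + 1 + d1 * min 3 (d2 + 1)) % (1 + d1) with hrdef
    have hrlt : r < 1 + d1 := by rw [hrdef]; exact Nat.mod_lt _ (by omega)
    have hdm : (1 + d1) * q + r = 2 * d2 + 1 + d1 * min 3 (d2 + 1) := by
      rw [hqdef, hrdef]; exact Nat.div_add_mod _ _
    rw [mac_small (show r ≤ d1 by omega)] at hg1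
    have e1 : (1 + d1 + 1) * q = (1 + d1) * q + q := by ring
    have e2 : (d1 + 1) * min 3 (d2 + 1) = d1 * min 3 (d2 + 1) + min 3 (d2 + 1) := by ring
    have hqB : q = min 3 (d2 + 1) := by omega
    rw [hqB] at hdm
    have e3 : (1 + d1) * min 3 (d2 + 1) = d1 * min 3 (d2 + 1) + min 3 (d2 + 1) := by ring
    have hcond1 : 2 * d2 + 1 = min 3 (d2 + 1) + r := by omega
    -- analyse condition (ii)
    set c2 := (2 + d2).choose 2 with hc2
    set c3 := (2 + d2 + 1).choose 2 with hc3
    have hc2pos : 0 < c2 := Nat.choose_pos (by omega)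
    set q2 := (2 * d2 + 1 + d1 * min 3 (d2 + 1)) / c2 with hq2def
    set r2 := (2 * d2 + 1 + d1 * min 3 (d2 + 1)) % c2 with hr2def
    have hr2lt : r2 < c2 := by rw [hr2def]; exact Nat.mod_lt _ hc2pos
    have hdm2 : c2 * q2 + r2 = 2 * d2 + 1 + d1 * min 3 (d2 + 1) := by
      rw [hq2def, hr2def]; exact Nat.div_add_mod _ _
    have hc32 : c3 = c2 + (d2 + 2) := by
      have h' : (d2 + 2 + 1).choose 2 = (d2 + 2).choose 1 + (d2 + 2).choose 2 :=
        Nat.choose_succ_succ' (d2 + 2) 1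
      rw [hc3, hc2, show 2 + d2 + 1 = d2 + 2 + 1 by ring, show 2 + d2 = d2 + 2 by ring, h',
        Nat.choose_one_right]
      ring
    have hsymm : (2 + d2).choose d2 = c2 := by
      have h' := Nat.choose_symm (show 2 ≤ 2 + d2 by omega)
      rw [show 2 + d2 - 2 = d2 by omega] at h'
      rw [hc2, ← h']
    have hexr2 : ∃ κ, IsMacaulayRep d2 r2 κ := by
      obtain ⟨κ, hκ, -⟩ := exists_rep d2 r2 2 (by rw [hsymm]; exact hr2lt)
      exact ⟨κ, hκ⟩
    rcases Nat.lt_or_ge d2 2 with hd2 | hd2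
    · interval_cases d2
      · -- d2 = 0
        have hc2v : c2 = 1 := by rw [hc2]; decide
        have hr20 : r2 = 0 := by omega
        rw [hr20, mac_small (Nat.le_refl 0)] at hg2
        have hc3v : c3 = 3 := by rw [hc3]; decide
        have hm1 : min 3 (0 + 1) = 1 := by omega
        have hm2 : min 3 (0 + 1 + 1) = 2 := by omega
        rw [hm1] at hdm2
        rw [hm2] at hg2
        have hd1eq : d1 * 1 = d1 := by ring
        rw [hd1eq, hc2v] at hdm2
        have hq2v : q2 = 1 + d1 := by omega
        rw [hc3v, hq2v] at hg2
        have hd1eq2 : d1 * 2 = 2 * d1 := by ring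
        rw [hd1eq2] at hg2
        have hd10 : d1 = 0 := by omega
        subst hd10
        exact not_gen00 k hgen
      · -- d2 = 1
        have hc2v : c2 = 3 := by rw [hc2]; decide
        have hc3v : c3 = 6 := by rw [hc3]; decide
        have hm1 : min 3 (1 + 1) = 2 := by omega
        have hm2 : min 3 (1 + 1 + 1) = 3 := by omega
        rw [hm1] at hdm2
        rw [hm2] at hg2
        rw [mac_one] at hg2
        have hd1eq : d1 * 2 = 2 * d1 := by ring
        have hd1eq2 : d1 * 3 = 3 * d1 := by ring
        rw [hd1eq, hc2v] at hdm2
        rw [hd1eq2, hc3v] at hg2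
        rw [hc2v] at hr2lt
        interval_cases r2
        · have hch : (0 + 1).choose 2 = 0 := by decide
          rw [hch] at hg2; omega
        · have hch : (1 + 1).choose 2 = 1 := by decide
          rw [hch] at hg2; omega
        · have hch : (2 + 1).choose 2 = 3 := by decide
          rw [hch] at hg2; omega
    · -- d2 ≥ 2
      have hm1 : min 3 (d2 + 1) = 3 := by omega
      have hm2 : min 3 (d2 + 1 + 1) = 3 := by omega
      rw [hm1] at hdm2 hcond1
      rw [hm2] at hg2
      have hq20 : q2 = 0 := by
        by_contra hq2ne
        have hq21 : 1 ≤ q2 := Nat.one_le_iff_ne_zero.mpr hq2ne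
        have hge := mac_ge hexr2
        have e4 : c3 * q2 = c2 * q2 + (d2 + 2) * q2 := by rw [hc32]; ring
        have e5 : (d2 + 2) * 1 ≤ (d2 + 2) * q2 := Nat.mul_le_mul_left _ hq21
        have e6 : (d2 + 2) * 1 = d2 + 2 := by ring
        omega
      rw [hq20] at hdm2
      have hr2L : r2 = 2 * d2 + 1 + d1 * 3 := by omega
      rw [hq20, hr2L] at hg2
      have hmac2 : macaulayBound d2 (2 * d2 + 1 + d1 * 3) = (2 * d2 + 1 + d1 * 3) + 2 := by
        omega
      have hbound := mac_two_bound hd2 (hr2L ▸ hexr2) hmac2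
      omega


/-- **Example 3.18.** For `I = (y₀², x₀y₀, x₀y₁³) ⊆ Cox(P¹ × P²)`, with Hilbert polynomial
`3t₁ + 2t₂ + 1`, there is no `(d₁,d₂) ∈ ℕ²` with `I` generated in degrees `≤ (d₁,d₂)` such that
the Hilbert function displays maximal growth in both the `(1,0)` and the `(0,1)` direction at
`(d₁,d₂)` simultaneously. -/
theorem no_simultaneous_maximal_growth {k : Type*} [Field k] :
    let x : Fin 2 → MvPolynomial (Fin 2 ⊕ Fin 3) k := fun i => X (Sum.inl i)
    let y : Fin 3 → MvPolynomial (Fin 2 ⊕ Fin 3) k := fun j => X (Sum.inr j)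
    let I : Ideal (MvPolynomial (Fin 2 ⊕ Fin 3) k) :=
      Ideal.span {y 0 ^ 2, x 0 * y 0, x 0 * y 1 ^ 3}
    IsHilbPoly k w18 I (3 * X 0 + 2 * X 1 + 1) ∧
    ¬ ∃ d1 d2 : ℕ, GenInDegLE w18 I ![d1, d2] ∧
        growthStep 1 (fun u => hilb k w18 I ![u, d2]) d1 ∧
        growthStep 2 (fun u => hilb k w18 I ![d1, u]) d2 := by
  intro x y I
  exact main_aux k

end Gotzmann
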